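/- For every t ∈ ℕ₀, the conditional expectation of the number of unhappy particles satisfies E[U_{t+1} | U_t] = U_t·(1 − ((n − H_t)/n)·(1 − 1/n)^{U_t − 1}) + H_t·(1 − (1 − 1/n)^{U_t}). -/

import Mathlib

open MeasureTheory ProbabilityTheory Filter Real Topology
open scoped ENNReal

namespace Dispersion

/-- The uniform distribution on the `n` vertices `{0, …, n-1}`
(a junk Dirac measure at `0` if `n = 0`). -/
noncomputable def moveDist (n : ℕ) : Measure ℕ :=
  if h : 0 < n then
    (PMF.uniformOfFinset (Finset.range n) (Finset.nonempty_range_iff.mpr h.ne')).toMeasure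
  else Measure.dirac 0

/-- `IsDriver n μ G` says that the family `G (t, i)` of random destinations (of particle `i`
for the step from time `t` to time `t+1`) consists of independent random variables, each
uniformly distributed on the `n` vertices, on the probability space `(Ωs, μ)`.  Together
with `pos` below this encodes the dispersion process on the complete graph `K_n`
(with loops) with `M` particles. -/
structure IsDriver {Ωs : Type} [MeasurableSpace Ωs] (n : ℕ) (μ : Measure Ωs)
    (G : ℕ × ℕ → Ωs → ℕ) : Prop where
  isProb : IsProbabilityMeasure μ
  meas : ∀ p, Measurable (G p)
  unif : ∀ p, μ.map (G p) = moveDist n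
  indep : iIndepFun G μ

open Classical in
/-- The position of particle `i` (for `i < M`) at time `t` in the dispersion process:
all particles start on vertex `0`; a particle that is happy (alone on its vertex) stays
put, and an unhappy particle moves to the random destination prescribed by the driver. -/
noncomputable def pos {Ωs : Type} (M : ℕ) (G : ℕ × ℕ → Ωs → ℕ) (ω : Ωs) : ℕ → ℕ → ℕ
  | 0, _ => 0
  | t + 1, i =>
    if ∀ j, j < M → j ≠ i → pos M G ω t j ≠ pos M G ω t i then pos M G ω t i
    else G (t, i) ω

open Classical in
/-- `U M G ω t` : the number of unhappy particles at time `t`. -/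
noncomputable def U {Ωs : Type} (M : ℕ) (G : ℕ × ℕ → Ωs → ℕ) (ω : Ωs) (t : ℕ) : ℕ :=
  ((Finset.range M).filter
    (fun i => ∃ j, j < M ∧ j ≠ i ∧ pos M G ω t j = pos M G ω t i)).card

/-- The dispersion time `T_{n,M}`, as an element of `ℕ∞`. -/
noncomputable def T {Ωs : Type} (M : ℕ) (G : ℕ × ℕ → Ωs → ℕ) (ω : Ωs) : ℕ∞ :=
  sInf {m : ℕ∞ | ∃ t : ℕ, m = (t : ℕ∞) ∧ U M G ω t = 0}

/-- The event `{T_{n,M} > r}` for a real threshold `r`. -/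
def dispGT {Ωs : Type} (M : ℕ) (G : ℕ × ℕ → Ωs → ℕ) (r : ℝ) : Set Ωs :=
  {ω | ∀ t : ℕ, U M G ω t = 0 → r < (t : ℝ)}

/-- The event `{T_{n,M} ≤ r}` for a real threshold `r`. -/
def dispLE {Ωs : Type} (M : ℕ) (G : ℕ × ℕ → Ωs → ℕ) (r : ℝ) : Set Ωs :=
  {ω | ∃ t : ℕ, (t : ℝ) ≤ r ∧ U M G ω t = 0}

/-- The event `{T_{n,M} < r}` for a real threshold `r`. -/
def dispLT {Ωs : Type} (M : ℕ) (G : ℕ × ℕ → Ωs → ℕ) (r : ℝ) : Set Ωs :=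
  {ω | ∃ t : ℕ, (t : ℝ) < r ∧ U M G ω t = 0}

/-- `ε̂ = max {|ε|, e·n^{-1/2}}`. -/
noncomputable def ehat (n : ℕ) (e : ℝ) : ℝ :=
  max |e| (Real.exp 1 * (n : ℝ) ^ (-(1 / 2 : ℝ)))


section Proof2

open Classical in
noncomputable def posAux (M : ℕ) (g : ℕ × ℕ → ℕ) : ℕ → ℕ → ℕ
  | 0, _ => 0
  | t + 1, i =>
    if ∀ j, j < M → j ≠ i → posAux M g t j ≠ posAux M g t i then posAux M g t i
    else g (t, i)

variable {Ωs : Type} [MeasurableSpace Ωs]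

omit [MeasurableSpace Ωs] in
lemma pos_eq_posAux (M : ℕ) (G : ℕ × ℕ → Ωs → ℕ) (ω : Ωs) :
    ∀ t i, pos M G ω t i = posAux M (fun p => G p ω) t i
  | 0, i => rfl
  | t + 1, i => by
    simp only [pos, posAux, pos_eq_posAux M G ω t]

lemma posAux_congr (M : ℕ) {g₁ g₂ : ℕ × ℕ → ℕ} :
    ∀ t, (∀ s j, s < t → j < M → g₁ (s, j) = g₂ (s, j)) →
      ∀ i, i < M → posAux M g₁ t i = posAux M g₂ t i
  | 0, _, _, _ => rfl
  | t + 1, h, i, hi => by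
    have ih := posAux_congr M t (fun s j hs hj => h s j (hs.trans (Nat.lt_succ_self t)) hj)
    simp only [posAux]
    have hcond : (∀ j, j < M → j ≠ i → posAux M g₁ t j ≠ posAux M g₁ t i) ↔
        (∀ j, j < M → j ≠ i → posAux M g₂ t j ≠ posAux M g₂ t i) := by
      constructor <;> intro H j hj hji <;>
        [rw [← ih j hj, ← ih i hi]; rw [ih j hj, ih i hi]] <;> exact H j hj hji
    rw [if_congr hcond (ih i hi) (h t i (Nat.lt_succ_self t) hi)]

lemma measurable_posAux {α : Type*} [MeasurableSpace α] {γ : α → ℕ × ℕ → ℕ}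
    (hγ : ∀ p, Measurable fun a => γ a p) (M : ℕ) :
    ∀ t i, Measurable fun a => posAux M (γ a) t i
  | 0, i => by
    simp only [posAux]; exact measurable_const
  | t + 1, i => by
    have ih : ∀ j, Measurable fun a => posAux M (γ a) t j := measurable_posAux hγ M t
    simp only [posAux]
    refine Measurable.ite ?_ (ih i) (hγ (t, i))
    have : {a | ∀ j, j < M → j ≠ i → posAux M (γ a) t j ≠ posAux M (γ a) t i} =
        ⋂ (j : ℕ) (_ : j < M) (_ : j ≠ i),
          {a | posAux M (γ a) t j = posAux M (γ a) t i}ᶜ := by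
      ext a; simp [Set.mem_iInter]
    rw [this]
    refine MeasurableSet.iInter fun j => MeasurableSet.iInter fun _ =>
      MeasurableSet.iInter fun _ => ?_
    exact (measurableSet_eq_fun (ih j) (ih i)).compl

lemma measurable_pos {n : ℕ} {μ : Measure Ωs} {G : ℕ × ℕ → Ωs → ℕ} (hG : IsDriver n μ G)
    (M t i : ℕ) : Measurable fun ω => pos M G ω t i := by
  have := measurable_posAux (γ := fun (ω : Ωs) (p : ℕ × ℕ) => G p ω) (fun p => hG.meas p) M t i
  simpa only [← pos_eq_posAux] using this

lemma measurableSet_countable_pi {ι : Type*} [Finite ι] (s : Set (ι → ℕ)) :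
    MeasurableSet s := by
  have h1 : ∀ v : ι → ℕ, MeasurableSet ({v} : Set (ι → ℕ)) := fun v => by
    have : ({v} : Set (ι → ℕ)) = ⋂ p, (fun w : ι → ℕ => w p) ⁻¹' {v p} := by
      ext w; simp [funext_iff]
    rw [this]
    exact MeasurableSet.iInter fun p => (measurable_pi_apply p) (measurableSet_singleton _)
  have : s = ⋃ v ∈ s, {v} := by simp
  rw [this]
  exact MeasurableSet.biUnion s.to_countable fun v _ => h1 v

/-- happiness of particle `i` in configuration `x` -/
def hpy {M : ℕ} (x : Fin M → ℕ) (i : Fin M) : Prop := ∀ j, j ≠ i → x j ≠ x i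

open Classical in
/-- number of unhappy particles in configuration `x` -/
noncomputable def uc {M : ℕ} (x : Fin M → ℕ) : ℕ :=
  (Finset.univ.filter fun i => ¬ hpy x i).card

/-- configuration at time `t` -/
noncomputable def Xc (M : ℕ) (G : ℕ × ℕ → Ωs → ℕ) (t : ℕ) (ω : Ωs) : Fin M → ℕ :=
  fun i => pos M G ω t i

omit [MeasurableSpace Ωs] in
lemma card_filter_eq {M : ℕ} (p : ℕ → Prop) (q : Fin M → Prop)
    [DecidablePred p] [DecidablePred q] (hpq : ∀ i : Fin M, p i.val ↔ q i) :
    ((Finset.range M).filter p).card = (Finset.univ.filter q).card := by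
  rw [Finset.card_filter, Finset.card_filter]
  rw [← Fin.sum_univ_eq_sum_range (fun j => if p j then 1 else 0) M]
  refine Finset.sum_congr rfl fun i _ => ?_
  simp [hpq i]

omit [MeasurableSpace Ωs] in
lemma U_eq_uc (M : ℕ) (G : ℕ × ℕ → Ωs → ℕ) (ω : Ωs) (t : ℕ) :
    U M G ω t = uc (Xc M G t ω) := by
  classical
  refine card_filter_eq _ _ fun i => ?_
  unfold hpy Xc
  constructor
  · rintro ⟨j, hj, hji, heq⟩
    intro hall
    exact hall ⟨j, hj⟩ (by simpa [Fin.ext_iff] using hji) heq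
  · intro h
    rw [Classical.not_forall] at h
    obtain ⟨j, hj⟩ := h
    rw [Classical.not_imp, Classical.not_imp] at hj
    exact ⟨j.val, j.isLt, by simpa [Fin.ext_iff] using hj.1, by simpa using hj.2.1⟩

omit [MeasurableSpace Ωs] in
lemma U_le (M : ℕ) (G : ℕ × ℕ → Ωs → ℕ) (ω : Ωs) (t : ℕ) : U M G ω t ≤ M := by
  classical
  calc U M G ω t ≤ (Finset.range M).card := Finset.card_filter_le _ _
  _ = M := Finset.card_range M

omit [MeasurableSpace Ωs] in
lemma pos_lt {n M : ℕ} {G : ℕ × ℕ → Ωs → ℕ} {ω : Ωs} (hn : 1 ≤ n) :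
    ∀ t, (∀ s j, s < t → j < M → G (s, j) ω < n) → ∀ i, i < M → pos M G ω t i < n
  | 0, _, i, _ => hn
  | t + 1, h, i, hi => by
    have ih := pos_lt hn t (fun s j hs hj => h s j (hs.trans (Nat.lt_succ_self t)) hj)
    simp only [pos]
    split
    · exact ih i hi
    · exact h t i (Nat.lt_succ_self t) hi

/-- the target function -/
noncomputable def Fk (n M : ℕ) (k : ℕ) : ℝ :=
  (k : ℝ) * (1 - (((n : ℝ) - ((M : ℝ) - (k : ℝ))) / n) * (1 - 1 / (n : ℝ)) ^ (k - 1)) +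
    ((M : ℝ) - (k : ℝ)) * (1 - (1 - 1 / (n : ℝ)) ^ k)

variable {n M : ℕ} {μ : Measure Ωs} {G : ℕ × ℕ → Ωs → ℕ}

lemma measure_single (hG : IsDriver n μ G) (hn : 1 ≤ n) (p : ℕ × ℕ) (v : ℕ) :
    μ (G p ⁻¹' {v}) = if v < n then ((n : ℝ≥0∞))⁻¹ else 0 := by
  rw [← Measure.map_apply (hG.meas p) (measurableSet_singleton v), hG.unif, moveDist,
    dif_pos (show 0 < n from hn)]
  rw [PMF.toMeasure_apply_singleton _ _ (measurableSet_singleton v),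
    PMF.uniformOfFinset_apply]
  simp [Finset.mem_range]

lemma measure_notlt (hG : IsDriver n μ G) (hn : 1 ≤ n) (p : ℕ × ℕ) :
    μ (G p ⁻¹' {w | ¬ w < n}) = 0 := by
  rw [← Measure.map_apply (hG.meas p) (by exact (Set.to_countable _).measurableSet), hG.unif,
    moveDist, dif_pos (show 0 < n from hn)]
  refine (PMF.toMeasure_apply_eq_zero_iff _ ((Set.to_countable _).measurableSet)).mpr ?_
  rw [PMF.support_uniformOfFinset]
  intro s hs1 hs2 v hv
  have h1 := hs1 hv
  have h2 := hs2 hv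
  simp only [Finset.coe_range, Set.mem_Iio] at h1
  exact (h2 h1).elim

lemma measure_compl_single (hG : IsDriver n μ G) (hn : 1 ≤ n) (p : ℕ × ℕ) {v : ℕ}
    (hv : v < n) : μ (G p ⁻¹' {v}ᶜ) = 1 - ((n : ℝ≥0∞))⁻¹ := by
  haveI := hG.isProb
  rw [Set.preimage_compl, prob_compl_eq_one_sub ((hG.meas p) (measurableSet_singleton v)),
    measure_single hG hn p v, if_pos hv]

lemma prod_inter (hG : IsDriver n μ G) (t : ℕ) (s : Finset (Fin M)) (B : Fin M → Set ℕ) :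
    μ (⋂ j ∈ s, G (t, j.val) ⁻¹' B j) = ∏ j ∈ s, μ (G (t, j.val) ⁻¹' B j) := by
  classical
  have hinj : Set.InjOn (fun j : Fin M => ((t, j.val) : ℕ × ℕ)) s := by
    intro a _ b _ h
    simpa [Prod.ext_iff, Fin.ext_iff] using h
  set B' : ℕ × ℕ → Set ℕ := fun p => if h : p.2 < M then B ⟨p.2, h⟩ else Set.univ with hB'
  have key := hG.indep.meas_biInter (S := s.image fun j => ((t, j.val) : ℕ × ℕ))
    (s := fun p => G p ⁻¹' B' p)
    (fun p _ => ⟨B' p, (Set.to_countable _).measurableSet, rfl⟩)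
  have h1 : (⋂ p ∈ s.image (fun j : Fin M => ((t, j.val) : ℕ × ℕ)), G p ⁻¹' B' p)
      = ⋂ j ∈ s, G (t, j.val) ⁻¹' B j := by
    ext ω
    simp only [Set.mem_iInter, Finset.mem_image]
    constructor
    · intro h j hj
      have := h (t, j.val) ⟨j, hj, rfl⟩
      simpa [hB', j.isLt] using this
    · rintro h p ⟨j, hj, rfl⟩
      simpa [hB', j.isLt] using h j hj
  have h2 : ∏ p ∈ s.image (fun j : Fin M => ((t, j.val) : ℕ × ℕ)), μ (G p ⁻¹' B' p)
      = ∏ j ∈ s, μ (G (t, j.val) ⁻¹' B j) := by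
    rw [Finset.prod_image (fun a ha b hb h => hinj ha hb h)]
    refine Finset.prod_congr rfl fun j _ => ?_
    simp [hB', j.isLt]
  rw [← h1, key, h2]

open Classical in
/-- position of particle `j` after one step from configuration `x` -/
noncomputable def nxt (G : ℕ × ℕ → Ωs → ℕ) (t : ℕ) (x : Fin M → ℕ) (j : Fin M) (ω : Ωs) : ℕ :=
  if hpy x j then x j else G (t, j.val) ω

/-- event that particle `i` is unhappy after one step from configuration `x` -/
def Bad (G : ℕ × ℕ → Ωs → ℕ) (t : ℕ) (x : Fin M → ℕ) (i : Fin M) : Set Ωs :=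
  {ω | ¬ hpy (fun j => nxt G t x j ω) i}

omit [MeasurableSpace Ωs] in
lemma unhpy_iff {M : ℕ} (y : Fin M → ℕ) (i : Fin M) :
    ¬ hpy y i ↔ ∃ j, j ≠ i ∧ y j = y i := by
  unfold hpy; push_neg; rfl

omit [MeasurableSpace Ωs] in
lemma nxt_happy {t : ℕ} {x : Fin M → ℕ} {j : Fin M} (hj : hpy x j) (ω : Ωs) :
    nxt G t x j ω = x j := if_pos hj

omit [MeasurableSpace Ωs] in
lemma nxt_unhappy {t : ℕ} {x : Fin M → ℕ} {j : Fin M} (hj : ¬ hpy x j) (ω : Ωs) :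
    nxt G t x j ω = G (t, j.val) ω := if_neg hj

lemma measurable_nxt (hG : IsDriver n μ G) (t : ℕ) (x : Fin M → ℕ) (j : Fin M) :
    Measurable (nxt G t x j) := by
  unfold nxt
  split
  · exact measurable_const
  · exact hG.meas _

lemma measurableSet_Bad (hG : IsDriver n μ G) (t : ℕ) (x : Fin M → ℕ) (i : Fin M) :
    MeasurableSet (Bad G t x i) := by
  have : Bad G t x i = ⋃ (j : Fin M) (_ : j ≠ i),
      {ω | nxt G t x j ω = nxt G t x i ω} := by
    ext ω
    simp only [Bad, Set.mem_setOf_eq, unhpy_iff, Set.mem_iUnion, Set.mem_setOf_eq]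
    exact ⟨fun ⟨j, h1, h2⟩ => ⟨j, h1, h2⟩, fun ⟨j, h1, h2⟩ => ⟨j, h1, h2⟩⟩
  rw [this]
  exact MeasurableSet.iUnion fun j => MeasurableSet.iUnion fun _ =>
    measurableSet_eq_fun (measurable_nxt hG t x j) (measurable_nxt hG t x i)

open Classical in
omit [MeasurableSpace Ωs] in
lemma card_happy {M : ℕ} (x : Fin M → ℕ) :
    (Finset.univ.filter (fun i => hpy x i)).card = M - uc x := by
  have h := Finset.card_filter_add_card_filter_not
    (s := (Finset.univ : Finset (Fin M))) (p := fun i => hpy x i)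
  rw [Finset.card_univ, Fintype.card_fin] at h
  unfold uc
  omega

open Classical in
omit [MeasurableSpace Ωs] in
lemma hvs_card {M n : ℕ} (x : Fin M → ℕ) (hx : ∀ i, x i < n) :
    ((Finset.univ.filter (fun i => hpy x i)).image x).card = M - uc x := by
  rw [Finset.card_image_of_injOn, card_happy]
  intro a _ b hb hab
  by_contra hne
  have hb' : hpy x b := (Finset.mem_filter.mp hb).2
  exact hb' a hne hab

open Classical in
omit [MeasurableSpace Ωs] in
lemma hvs_subset {M n : ℕ} (x : Fin M → ℕ) (hx : ∀ i, x i < n) :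
    ((Finset.univ.filter (fun i => hpy x i)).image x) ⊆ Finset.range n := by
  intro v hv
  obtain ⟨j, _, rfl⟩ := Finset.mem_image.mp hv
  exact Finset.mem_range.mpr (hx j)

lemma badProb_happy (hG : IsDriver n μ G) (hn : 1 ≤ n) (t : ℕ) (x : Fin M → ℕ)
    (hx : ∀ i, x i < n) (i : Fin M) (hi : hpy x i) :
    μ (Bad G t x i) = 1 - (1 - ((n : ℝ≥0∞))⁻¹) ^ (uc x) := by
  classical
  haveI := hG.isProb
  set Us : Finset (Fin M) := Finset.univ.filter (fun j => ¬ hpy x j) with hUs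
  have hcompl : (Bad G t x i)ᶜ = ⋂ j ∈ Us, G (t, j.val) ⁻¹' {x i}ᶜ := by
    ext ω
    simp only [Set.mem_compl_iff, Bad, Set.mem_setOf_eq, not_not, Set.mem_iInter,
      hUs, Finset.mem_filter, Finset.mem_univ, true_and, Set.mem_preimage,
      Set.mem_compl_iff, Set.mem_singleton_iff]
    constructor
    · intro h j hj
      have hji : j ≠ i := fun e => hj (e ▸ hi)
      have := h j hji
      simp only [nxt_unhappy hj, nxt_happy hi] at this
      exact this
    · intro h j hji
      simp only [nxt_happy hi]
      by_cases hj : hpy x j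
      · simp only [nxt_happy hj]
        exact hi j hji
      · simp only [nxt_unhappy hj]
        exact h j hj
  have hmeasc : μ ((Bad G t x i)ᶜ) = (1 - ((n : ℝ≥0∞))⁻¹) ^ (uc x) := by
    rw [hcompl, prod_inter hG t Us (fun _ => {x i}ᶜ)]
    rw [Finset.prod_congr rfl (fun j _ => measure_compl_single hG hn (t, j.val) (hx i))]
    rw [Finset.prod_const]
    rfl
  have h2 := prob_compl_eq_one_sub (μ := μ) (measurableSet_Bad hG t x i).compl
  rw [compl_compl, hmeasc] at h2
  exact h2

lemma badProb_unhappy (hG : IsDriver n μ G) (hn : 1 ≤ n) (t : ℕ) (x : Fin M → ℕ)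
    (hx : ∀ i, x i < n) (i : Fin M) (hi : ¬ hpy x i) :
    μ (Bad G t x i) =
      1 - ((n - (M - uc x) : ℕ) : ℝ≥0∞) * ((n : ℝ≥0∞))⁻¹ *
        (1 - ((n : ℝ≥0∞))⁻¹) ^ (uc x - 1) := by
  classical
  haveI := hG.isProb
  set k := uc x with hk
  set Us : Finset (Fin M) := Finset.univ.filter (fun j => ¬ hpy x j) with hUs
  have hiUs : i ∈ Us := Finset.mem_filter.mpr ⟨Finset.mem_univ i, hi⟩
  set hvs : Finset ℕ := (Finset.univ.filter (fun j => hpy x j)).image x with hhvs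
  set c : ℝ≥0∞ := ((n : ℝ≥0∞))⁻¹ * (1 - ((n : ℝ≥0∞))⁻¹) ^ (k - 1) with hc
  have hpart : μ ((Bad G t x i)ᶜ) = ∑' v : ℕ, μ ((Bad G t x i)ᶜ ∩ G (t, i.val) ⁻¹' {v}) := by
    rw [← measure_iUnion]
    · congr 1
      ext ω
      simp only [Set.mem_iUnion, Set.mem_inter_iff, Set.mem_preimage, Set.mem_singleton_iff]
      exact ⟨fun h => ⟨G (t, i.val) ω, h, rfl⟩, fun ⟨v, h, _⟩ => h⟩
    · intro v w hvw
      simp only [Function.onFun, Set.disjoint_left]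
      rintro ω ⟨-, h1⟩ ⟨-, h2⟩
      exact hvw (by rw [← h1, ← h2])
    · intro v
      exact ((measurableSet_Bad hG t x i).compl).inter (hG.meas _ (measurableSet_singleton v))
  have hval : ∀ v : ℕ, μ ((Bad G t x i)ᶜ ∩ G (t, i.val) ⁻¹' {v}) =
      if v < n ∧ v ∉ hvs then c else 0 := by
    intro v
    by_cases hvn : v < n
    · by_cases hvh : v ∈ hvs
      · rw [if_neg (fun h => h.2 hvh)]
        obtain ⟨j, hjmem, hxj⟩ := Finset.mem_image.mp hvh
        have hj : hpy x j := (Finset.mem_filter.mp hjmem).2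
        have hji : j ≠ i := fun e => hi (e ▸ hj)
        convert measure_empty (μ := μ)
        ext ω
        simp only [Set.mem_inter_iff, Set.mem_compl_iff, Bad, Set.mem_setOf_eq, not_not,
          Set.mem_preimage, Set.mem_singleton_iff, Set.mem_empty_iff_false, iff_false,
          not_and]
        intro hhap hGv
        have := hhap j hji
        simp only [nxt_happy hj, nxt_unhappy hi, hGv, hxj] at this
        exact this rfl
      · rw [if_pos ⟨hvn, hvh⟩]
        have hset : (Bad G t x i)ᶜ ∩ G (t, i.val) ⁻¹' {v} =
            ⋂ j ∈ Us, G (t, j.val) ⁻¹' (if j = i then {v} else {v}ᶜ) := by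
          ext ω
          simp only [Set.mem_inter_iff, Set.mem_compl_iff, Bad, Set.mem_setOf_eq, not_not,
            Set.mem_preimage, Set.mem_singleton_iff, Set.mem_iInter, hUs,
            Finset.mem_filter, Finset.mem_univ, true_and]
          constructor
          · rintro ⟨hhap, hGv⟩ j hj
            by_cases hji : j = i
            · subst hji
              simp only [if_pos rfl, Set.mem_preimage, Set.mem_singleton_iff]
              exact hGv
            · simp only [if_neg hji, Set.mem_preimage, Set.mem_compl_iff,
                Set.mem_singleton_iff]
              have := hhap j hji
              simp only [nxt_unhappy hj, nxt_unhappy hi, hGv] at this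
              exact this
          · intro h
            have hGv : G (t, i.val) ω = v := by
              have := h i hi
              simpa using this
            refine ⟨?_, hGv⟩
            intro j hji
            simp only [nxt_unhappy hi, hGv]
            by_cases hj : hpy x j
            · simp only [nxt_happy hj]
              intro hxv
              exact hvh (Finset.mem_image.mpr ⟨j, Finset.mem_filter.mpr
                ⟨Finset.mem_univ j, hj⟩, hxv⟩)
            · simp only [nxt_unhappy hj]
              have := h j hj
              simpa [if_neg hji] using this
        rw [hset, prod_inter hG t Us _]
        rw [← Finset.mul_prod_erase Us _ hiUs]
        have h1 : μ (G (t, i.val) ⁻¹' (if i = i then {v} else {v}ᶜ)) = ((n : ℝ≥0∞))⁻¹ := by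
          rw [if_pos rfl, measure_single hG hn _ v, if_pos hvn]
        have h2 : ∏ j ∈ Us.erase i, μ (G (t, j.val) ⁻¹' (if j = i then {v} else {v}ᶜ)) =
            (1 - ((n : ℝ≥0∞))⁻¹) ^ (k - 1) := by
          have hterm : ∀ j ∈ Us.erase i,
              μ (G (t, j.val) ⁻¹' (if j = i then {v} else {v}ᶜ)) = 1 - ((n : ℝ≥0∞))⁻¹ := by
            intro j hj
            rw [if_neg (Finset.ne_of_mem_erase hj), measure_compl_single hG hn _ hvn]
          rw [Finset.prod_congr rfl hterm, Finset.prod_const,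
            Finset.card_erase_of_mem hiUs]
          rfl
        rw [h1, h2]
    · rw [if_neg (fun h => hvn h.1)]
      refine measure_mono_null Set.inter_subset_right ?_
      refine measure_mono_null ?_ (measure_notlt hG hn (t, i.val))
      intro ω h
      simp only [Set.mem_preimage, Set.mem_singleton_iff] at h
      simpa [h] using hvn
  have hzero : ∀ v ∉ Finset.range n \ hvs, (if v < n ∧ v ∉ hvs then c else 0) = 0 := by
    intro v hv
    rw [Finset.mem_sdiff, Finset.mem_range] at hv
    exact if_neg (fun hcon => hv ⟨hcon.1, hcon.2⟩)
  have hsum : ∑' v : ℕ, μ ((Bad G t x i)ᶜ ∩ G (t, i.val) ⁻¹' {v}) =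
      ((n - (M - k) : ℕ) : ℝ≥0∞) * c := by
    rw [tsum_congr hval, tsum_eq_sum hzero]
    have hterm : ∀ v ∈ Finset.range n \ hvs, (if v < n ∧ v ∉ hvs then c else 0) = c := by
      intro v hv
      rw [Finset.mem_sdiff, Finset.mem_range] at hv
      exact if_pos hv
    rw [Finset.sum_congr rfl hterm, Finset.sum_const,
      Finset.card_sdiff_of_subset (hvs_subset x hx), Finset.card_range, hvs_card x hx, nsmul_eq_mul]
  have h2 := prob_compl_eq_one_sub (μ := μ) (measurableSet_Bad hG t x i).compl
  rw [compl_compl, hpart, hsum] at h2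
  rw [h2, hc, ← mul_assoc]

end Proof2

section Proof5
variable {Ωs : Type} [MeasurableSpace Ωs] {n M : ℕ} {μ : Measure Ωs} {G : ℕ × ℕ → Ωs → ℕ}

lemma indep_atom (hG : IsDriver n μ G) (t : ℕ) (x : Fin M → ℕ) (i : Fin M) :
    μ (Xc M G t ⁻¹' {x} ∩ Bad G t x i) = μ (Xc M G t ⁻¹' {x}) * μ (Bad G t x i) := by
  classical
  set S₁ : Finset (ℕ × ℕ) := Finset.range t ×ˢ Finset.range M with hS₁
  set S₂ : Finset (ℕ × ℕ) := {t} ×ˢ Finset.range M with hS₂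
  have hdisj : Disjoint S₁ S₂ := by
    rw [Finset.disjoint_left]
    rintro ⟨a, b⟩ h1 h2
    simp only [hS₁, hS₂, Finset.mem_product, Finset.mem_range, Finset.mem_singleton] at h1 h2
    omega
  have hIF := hG.indep.indepFun_finset S₁ S₂ hdisj hG.meas
  set φ : (S₁ → ℕ) → (Fin M → ℕ) := fun v i =>
    posAux M (fun p => if h : p ∈ S₁ then v ⟨p, h⟩ else 0) t i with hφ
  have hXφ : ∀ ω : Ωs, Xc M G t ω = φ (fun p : S₁ => G p.val ω) := by
    intro ω
    funext i
    show pos M G ω t i.val = _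
    rw [pos_eq_posAux, hφ]
    refine posAux_congr M t ?_ i.val i.isLt
    intro s j hs hj
    have hmem : ((s, j) : ℕ × ℕ) ∈ S₁ := by
      simp [hS₁, Finset.mem_product, hs, hj]
    simp [hmem]
  have hA : Xc M G t ⁻¹' {x} = (fun ω (p : S₁) => G p.val ω) ⁻¹' {v | φ v = x} := by
    ext ω
    simp only [Set.mem_preimage, Set.mem_singleton_iff, Set.mem_setOf_eq, hXφ ω]
  have hmem2 : ∀ j : Fin M, ((t, (j : ℕ)) : ℕ × ℕ) ∈ S₂ := fun j => by
    simp [hS₂, Finset.mem_product, j.isLt]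
  have hB : Bad G t x i = (fun ω (p : S₂) => G p.val ω) ⁻¹'
      {w : S₂ → ℕ | ¬ hpy (fun j : Fin M =>
        if hpy x j then x j else w ⟨(t, j.val), hmem2 j⟩) i} := by
    ext ω
    simp only [Bad, Set.mem_setOf_eq, Set.mem_preimage, nxt]
  rw [hA, hB]
  exact hIF.measure_inter_preimage_eq_mul _ _ (measurableSet_countable_pi _)
    (measurableSet_countable_pi _)

open Classical in
lemma sum_badProb (hG : IsDriver n μ G) (hn : 1 ≤ n) (t : ℕ) (x : Fin M → ℕ)
    (hx : ∀ i, x i < n) :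
    ∑ i : Fin M, (μ (Bad G t x i)).toReal = Fk n M (uc x) := by
  haveI := hG.isProb
  set k := uc x with hk
  have hkM : k ≤ M := by
    rw [hk]
    unfold uc
    calc (Finset.univ.filter fun i => ¬ hpy x i).card ≤ (Finset.univ : Finset (Fin M)).card :=
      Finset.card_filter_le _ _
    _ = M := by rw [Finset.card_univ, Fintype.card_fin]
  have hMkn : M - k ≤ n := by
    have h1 : ((Finset.univ.filter (fun i => hpy x i)).image x).card ≤ n := by
      calc _ ≤ (Finset.range n).card := Finset.card_le_card (hvs_subset x hx)
      _ = n := Finset.card_range n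
    rw [hvs_card x hx] at h1
    exact h1
  have hn0 : (n : ℝ≥0∞) ≠ 0 := by
    simp only [ne_eq, Nat.cast_eq_zero]
    omega
  have hinvle : ((n : ℝ≥0∞))⁻¹ ≤ 1 := by
    rw [ENNReal.inv_le_one]
    exact_mod_cast hn
  have hble : (1 : ℝ≥0∞) - ((n : ℝ≥0∞))⁻¹ ≤ 1 := tsub_le_self
  have hbtoReal : ((1 : ℝ≥0∞) - ((n : ℝ≥0∞))⁻¹).toReal = 1 - 1 / (n : ℝ) := by
    rw [ENNReal.toReal_sub_of_le hinvle ENNReal.one_ne_top, ENNReal.toReal_one,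
      ENNReal.toReal_inv, ENNReal.toReal_natCast, one_div]
  have hpowtoReal : ∀ m : ℕ, (((1 : ℝ≥0∞) - ((n : ℝ≥0∞))⁻¹) ^ m).toReal
      = (1 - 1 / (n : ℝ)) ^ m := by
    intro m
    rw [ENNReal.toReal_pow, hbtoReal]
  have hpowle : ∀ m : ℕ, ((1 : ℝ≥0∞) - ((n : ℝ≥0∞))⁻¹) ^ m ≤ 1 := fun m => pow_le_one' hble m
  have hcard2 : ((n - (M - k) : ℕ) : ℝ≥0∞) * ((n : ℝ≥0∞))⁻¹ ≤ 1 := by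
    calc ((n - (M - k) : ℕ) : ℝ≥0∞) * ((n : ℝ≥0∞))⁻¹
        ≤ ((n : ℕ) : ℝ≥0∞) * ((n : ℝ≥0∞))⁻¹ := by
          refine mul_le_mul_left ?_ _
          exact_mod_cast Nat.sub_le n (M - k)
    _ = 1 := ENNReal.mul_inv_cancel hn0 (ENNReal.natCast_ne_top n)
  have hvalU : ∀ i : Fin M, ¬ hpy x i → (μ (Bad G t x i)).toReal =
      1 - ((n : ℝ) - ((M : ℝ) - (k : ℝ))) / n * (1 - 1 / (n : ℝ)) ^ (k - 1) := by
    intro i hi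
    rw [badProb_unhappy hG hn t x hx i hi, ← hk]
    have hle1 : ((n - (M - k) : ℕ) : ℝ≥0∞) * ((n : ℝ≥0∞))⁻¹ *
        (1 - ((n : ℝ≥0∞))⁻¹) ^ (k - 1) ≤ 1 := by
      calc _ ≤ 1 * 1 := mul_le_mul' hcard2 (hpowle (k - 1))
      _ = 1 := one_mul 1
    rw [ENNReal.toReal_sub_of_le hle1 ENNReal.one_ne_top, ENNReal.toReal_one,
      ENNReal.toReal_mul, ENNReal.toReal_mul, ENNReal.toReal_natCast,
      ENNReal.toReal_inv, ENNReal.toReal_natCast, hpowtoReal]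
    rw [Nat.cast_sub hMkn, Nat.cast_sub hkM]
    ring
  have hvalH : ∀ i : Fin M, hpy x i → (μ (Bad G t x i)).toReal =
      1 - (1 - 1 / (n : ℝ)) ^ k := by
    intro i hi
    rw [badProb_happy hG hn t x hx i hi, ← hk]
    rw [ENNReal.toReal_sub_of_le (hpowle k) ENNReal.one_ne_top, ENNReal.toReal_one,
      hpowtoReal]
  rw [← Finset.sum_filter_add_sum_filter_not Finset.univ (fun i => hpy x i)]
  rw [Finset.sum_congr rfl (fun i hi => hvalH i (Finset.mem_filter.mp hi).2),
    Finset.sum_congr rfl (fun i hi => hvalU i (Finset.mem_filter.mp hi).2),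
    Finset.sum_const, Finset.sum_const, card_happy x]
  have huc : (Finset.univ.filter (fun i => ¬ hpy x i)).card = k := rfl
  rw [huc, nsmul_eq_mul, nsmul_eq_mul, Nat.cast_sub hkM]
  unfold Fk
  ring

lemma measurable_Xc (hG : IsDriver n μ G) (t : ℕ) : Measurable (Xc M G t) :=
  measurable_pi_lambda _ (fun i => measurable_pos hG M t i.val)

lemma atom_null (hG : IsDriver n μ G) (hn : 1 ≤ n) (t : ℕ) (x : Fin M → ℕ)
    (hx : ¬ ∀ i : Fin M, x i < n) : μ (Xc M G t ⁻¹' {x}) = 0 := by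
  push_neg at hx
  obtain ⟨i0, hi0⟩ := hx
  have hN : μ (⋃ (p : ℕ × ℕ) (_ : p.1 < t ∧ p.2 < M), G p ⁻¹' {w | ¬ w < n}) = 0 :=
    measure_iUnion_null fun p => measure_iUnion_null fun _ => measure_notlt hG hn p
  refine measure_mono_null ?_ hN
  intro ω hω
  by_contra hcon
  simp only [Set.mem_iUnion, Set.mem_preimage, Set.mem_setOf_eq, not_exists, not_not] at hcon
  have hall : ∀ s j, s < t → j < M → G (s, j) ω < n := fun s j hs hj =>
    hcon (s, j) ⟨hs, hj⟩
  have hlt := pos_lt hn t hall i0.val i0.isLt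
  have hxc : Xc M G t ω = x := hω
  rw [show pos M G ω t i0.val = Xc M G t ω i0 from rfl, hxc] at hlt
  omega

lemma atom_integral (hG : IsDriver n μ G) (hn : 1 ≤ n) (t : ℕ) (x : Fin M → ℕ) :
    ∫ ω in Xc M G t ⁻¹' {x}, (U M G ω (t + 1) : ℝ) ∂μ
      = Fk n M (uc x) * (μ (Xc M G t ⁻¹' {x})).toReal := by
  classical
  haveI := hG.isProb
  have hAmeas : MeasurableSet (Xc M G t ⁻¹' {x}) :=
    measurable_Xc hG t (measurableSet_countable_pi _)
  by_cases hx : ∀ i : Fin M, x i < n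
  · have hcfg : ∀ ω ∈ Xc M G t ⁻¹' {x}, ∀ j : Fin M, pos M G ω (t + 1) j.val = nxt G t x j ω := by
      intro ω hω j
      have hXx : ∀ j' : Fin M, pos M G ω t j'.val = x j' := fun j' =>
        congrFun (show Xc M G t ω = x from hω) j'
      have hcond : (∀ i', i' < M → i' ≠ j.val → pos M G ω t i' ≠ pos M G ω t j.val) ↔
          hpy x j := by
        constructor
        · intro h j' hj'
          have := h j'.val j'.isLt (by simpa [Fin.ext_iff] using hj')
          rwa [hXx j', hXx j] at this
        · intro h i' hi' hne
          have h1 : pos M G ω t i' = x ⟨i', hi'⟩ := hXx ⟨i', hi'⟩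
          rw [h1, hXx j]
          exact h ⟨i', hi'⟩ (by simpa [Fin.ext_iff] using hne)
      by_cases hj : hpy x j
      · rw [pos, if_pos (hcond.mpr hj), hXx j, nxt_happy hj]
      · rw [pos, if_neg (fun hc => hj (hcond.mp hc)), nxt_unhappy hj]
    have hUeq : ∀ ω ∈ Xc M G t ⁻¹' {x},
        (U M G ω (t + 1) : ℝ) = ∑ i : Fin M, if ω ∈ Bad G t x i then (1 : ℝ) else 0 := by
      intro ω hω
      have h1 : Xc M G (t + 1) ω = fun j => nxt G t x j ω := funext fun j => hcfg ω hω j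
      rw [U_eq_uc, h1]
      unfold uc
      rw [Finset.card_filter]
      push_cast
      refine Finset.sum_congr rfl fun i _ => ?_
      by_cases h : ω ∈ Bad G t x i
      · rw [if_pos h, if_pos (show ¬ hpy (fun j => nxt G t x j ω) i from h)]
      · rw [if_neg h, if_neg (show ¬ ¬ hpy (fun j => nxt G t x j ω) i from
          fun hc => h hc)]
    have hint : ∫ ω in Xc M G t ⁻¹' {x}, (U M G ω (t + 1) : ℝ) ∂μ
        = ∑ i : Fin M, (μ (Xc M G t ⁻¹' {x} ∩ Bad G t x i)).toReal := by
      rw [setIntegral_congr_fun hAmeas hUeq]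
      rw [integral_finset_sum]
      · refine Finset.sum_congr rfl fun i _ => ?_
        have hind : (fun ω => if ω ∈ Bad G t x i then (1 : ℝ) else 0)
            = Set.indicator (Bad G t x i) (fun _ => (1 : ℝ)) := by
          funext ω; rw [Set.indicator_apply]
        rw [hind, setIntegral_indicator (measurableSet_Bad hG t x i), setIntegral_const,
          smul_eq_mul, mul_one]
        rfl
      · intro i _
        have hind : (fun ω => if ω ∈ Bad G t x i then (1 : ℝ) else 0)
            = Set.indicator (Bad G t x i) (fun _ => (1 : ℝ)) := by
          funext ω; rw [Set.indicator_apply]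
        rw [hind]
        exact (integrable_const (1 : ℝ)).indicator (measurableSet_Bad hG t x i)
    rw [hint]
    have hprob : ∀ i : Fin M, (μ (Xc M G t ⁻¹' {x} ∩ Bad G t x i)).toReal
        = (μ (Xc M G t ⁻¹' {x})).toReal * (μ (Bad G t x i)).toReal := by
      intro i
      rw [indep_atom hG t x i, ENNReal.toReal_mul]
    rw [Finset.sum_congr rfl fun i _ => hprob i, ← Finset.mul_sum,
      sum_badProb hG hn t x hx, mul_comm]
  · have h0 := atom_null hG hn t x hx
    rw [Measure.restrict_eq_zero.mpr h0, integral_zero_measure, h0, ENNReal.toReal_zero,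
      mul_zero]

end Proof5

/-- Lemma 2.3: exact formula for `E[U_{t+1} | U_t]`. -/
theorem statement2 (n M : ℕ) (hn : 1 ≤ n) (hM : 2 ≤ M)
    (Ωs : Type) [MeasurableSpace Ωs] (μ : Measure Ωs) (G : ℕ × ℕ → Ωs → ℕ)
    (hG : IsDriver n μ G) (t : ℕ) :
    μ[(fun ω => (U M G ω (t + 1) : ℝ))|MeasurableSpace.comap (fun ω => U M G ω t) ⊤]
      =ᵐ[μ]
      fun ω =>
        (U M G ω t : ℝ) *
            (1 - (((n : ℝ) - ((M : ℝ) - (U M G ω t : ℝ))) / n) *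
              (1 - 1 / (n : ℝ)) ^ (U M G ω t - 1)) +
          ((M : ℝ) - (U M G ω t : ℝ)) * (1 - (1 - 1 / (n : ℝ)) ^ (U M G ω t)) := by
  classical
  haveI := hG.isProb
  have hUmeas : ∀ r, Measurable fun ω => U M G ω r := by
    intro r
    have h1 : Measurable (Xc M G r) := measurable_Xc hG r
    have h2 : Measurable (fun y : Fin M → ℕ => uc y) := fun s _ => measurableSet_countable_pi _
    have h3 : (fun ω => U M G ω r) = fun ω => uc (Xc M G r ω) :=
      funext fun ω => U_eq_uc M G ω r
    rw [h3]
    exact h2.comp h1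
  have hle := (hUmeas t).comap_le
  haveI : SigmaFinite (μ.trim hle) := by
    haveI : IsFiniteMeasure (μ.trim hle) := by
      constructor
      rw [trim_measurableSet_eq hle MeasurableSet.univ]
      exact measure_lt_top μ _
    infer_instance
  have hfmeas : Measurable fun ω => (U M G ω (t + 1) : ℝ) :=
    (measurable_of_countable _).comp (hUmeas (t + 1))
  have hfint : Integrable (fun ω => (U M G ω (t + 1) : ℝ)) μ := by
    refine Integrable.mono' (integrable_const (M : ℝ)) hfmeas.aestronglyMeasurable
      (Filter.Eventually.of_forall fun ω => ?_)
    rw [Real.norm_eq_abs, abs_of_nonneg (by positivity)]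
    exact_mod_cast U_le M G ω (t + 1)
  have hgmeas : Measurable fun ω => Fk n M (U M G ω t) :=
    (measurable_of_countable (Fk n M)).comp (hUmeas t)
  have hgbd : ∀ ω, ‖Fk n M (U M G ω t)‖ ≤ ∑ k ∈ Finset.range (M + 1), |Fk n M k| := by
    intro ω
    rw [Real.norm_eq_abs]
    refine Finset.single_le_sum (f := fun k => |Fk n M k|) (fun k _ => abs_nonneg _) ?_
    exact Finset.mem_range.mpr (Nat.lt_succ_of_le (U_le M G ω t))
  have hgint : Integrable (fun ω => Fk n M (U M G ω t)) μ :=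
    Integrable.mono' (integrable_const _) hgmeas.aestronglyMeasurable
      (Filter.Eventually.of_forall hgbd)
  have key : (fun ω => Fk n M (U M G ω t)) =ᵐ[μ]
      μ[(fun ω => (U M G ω (t + 1) : ℝ))|MeasurableSpace.comap (fun ω => U M G ω t) ⊤] := by
    refine ae_eq_condExp_of_forall_setIntegral_eq hle hfint
      (fun s _ _ => hgint.integrableOn) (fun s hs _ => ?_) ?_
    · obtain ⟨B, -, rfl⟩ := hs
      have hm : ∀ y : {y : Fin M → ℕ // uc y ∈ B}, MeasurableSet (Xc M G t ⁻¹' {y.val}) :=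
        fun y => measurable_Xc hG t (measurableSet_countable_pi _)
      have hdisj : Pairwise (Function.onFun Disjoint fun y : {y : Fin M → ℕ // uc y ∈ B} =>
          Xc M G t ⁻¹' {y.val}) := by
        intro a b hab
        simp only [Function.onFun]
        refine Set.disjoint_left.mpr fun ω h1 h2 => hab (Subtype.ext ?_)
        have e1 : Xc M G t ω = a.val := h1
        have e2 : Xc M G t ω = b.val := h2
        rw [← e1, e2]
      have hcover : (fun ω => U M G ω t) ⁻¹' B =
          ⋃ y : {y : Fin M → ℕ // uc y ∈ B}, Xc M G t ⁻¹' {y.val} := by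
        ext ω
        simp only [Set.mem_preimage, Set.mem_iUnion, Set.mem_singleton_iff]
        constructor
        · intro h
          exact ⟨⟨Xc M G t ω, by rw [← U_eq_uc M G ω t]; exact h⟩, rfl⟩
        · rintro ⟨y, h⟩
          rw [U_eq_uc M G ω t, h]
          exact y.property
      rw [hcover, integral_iUnion hm hdisj (hgint.integrableOn),
        integral_iUnion hm hdisj (hfint.integrableOn)]
      refine tsum_congr fun y => ?_
      rw [atom_integral hG hn t y.val]
      have hconst : ∀ ω ∈ Xc M G t ⁻¹' {y.val}, Fk n M (U M G ω t) = Fk n M (uc y.val) := by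
        intro ω hω
        rw [U_eq_uc M G ω t, show Xc M G t ω = y.val from hω]
      rw [setIntegral_congr_fun (hm y) hconst, setIntegral_const, smul_eq_mul, mul_comm]
      rfl
    · have hUm' : @Measurable Ωs ℕ (MeasurableSpace.comap (fun ω => U M G ω t) ⊤) _
          (fun ω => U M G ω t) := fun s hs => ⟨s, hs, rfl⟩
      exact ⟨fun ω => Fk n M (U M G ω t),
        (Measurable.comp (measurable_of_countable (Fk n M)) hUm').stronglyMeasurable,
        Filter.EventuallyEq.rfl⟩
  exact key.symm

end Dispersion
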